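/- For all integers n ≥ 2 and d ≥ 2, the following chain of inequalities holds: v_n(d)/n ≤ α_n(d) ≤ ρ_n(d) ≤ v_n(d)/n + ((n−1)/n)·v_{n−1}(d), where v_n(d) = C(n+d−1, d), with the inequalities read in ℚ. -/

import Mathlib

/-- Monomials of degree `d` in `n` variables, identified with exponent vectors
`a : Fin n → ℕ` with `∑ i, a i = d`. -/
def Mset (n d : ℕ) : Finset (Fin n → ℕ) := Finset.Nat.antidiagonalTuple n d

/-- `R₁W = { a + e_i : a ∈ W, 1 ≤ i ≤ n }`, where `e_i` is the `i`-th standard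
unit vector. -/
def R1 (n : ℕ) (W : Finset (Fin n → ℕ)) : Finset (Fin n → ℕ) :=
  (W ×ˢ (Finset.univ : Finset (Fin n))).image fun p => p.1 + Pi.single p.2 1
/-- The spreading number `α_n(d) = max{ |W| : W ⊆ M_d and |R₁W| = n·|W| }`. -/
noncomputable def spread (n d : ℕ) : ℕ :=
  sSup {k | ∃ W : Finset (Fin n → ℕ),
    W ⊆ Mset n d ∧ (R1 n W).card = n * W.card ∧ W.card = k}
/-- The covering number `ρ_n(e) = min{ |W| : W ⊆ M_{e-1} and R₁W = M_e }`. -/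
noncomputable def rho (n e : ℕ) : ℕ :=
  sInf {k | ∃ W : Finset (Fin n → ℕ),
    W ⊆ Mset n (e - 1) ∧ R1 n W = Mset n e ∧ W.card = k}

namespace GGR
variable {n : ℕ}

def wt (n : ℕ) (a : Fin n → ℕ) : ZMod n := ∑ j, (j.val : ZMod n) * (a j : ZMod n)

lemma wt_add_single (a : Fin n → ℕ) (i : Fin n) :
    wt n (a + Pi.single i 1) = wt n a + (i.val : ZMod n) := by
  unfold wt
  have : ∀ j : Fin n, ((a + Pi.single i 1 : Fin n → ℕ) j : ZMod n)
      = (a j : ZMod n) + ((Pi.single i 1 : Fin n → ℕ) j : ZMod n) := by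
    intro j; push_cast [Pi.add_apply]; ring
  simp only [this, mul_add, Finset.sum_add_distrib]
  congr 1
  simp [Pi.single_apply, apply_ite, mul_ite, Finset.sum_ite_eq']

lemma val_cast_inj [NeZero n] {i j : Fin n} (h : (i.val : ZMod n) = (j.val : ZMod n)) :
    i = j := by
  have h2 := congrArg ZMod.val h
  rw [ZMod.val_cast_of_lt i.isLt, ZMod.val_cast_of_lt j.isLt] at h2
  exact Fin.ext h2

/-- the weight-`r` class of `Mset n d` -/
def cls (n d : ℕ) (r : ZMod n) : Finset (Fin n → ℕ) := (Mset n d).filter (fun a => wt n a = r)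

lemma cls_subset {d : ℕ} {r : ZMod n} : cls n d r ⊆ Mset n d := Finset.filter_subset _ _

lemma cls_injOn [NeZero n] {d : ℕ} {r : ZMod n} :
    Set.InjOn (fun p : (Fin n → ℕ) × Fin n => p.1 + Pi.single p.2 1)
      ((cls n d r ×ˢ (Finset.univ : Finset (Fin n)) : Finset _) : Set _) := by
  rintro ⟨a, i⟩ ha ⟨b, j⟩ hb hab
  simp only [Finset.mem_coe, Finset.mem_product] at ha hb
  have hwa : wt n a = r := (Finset.mem_filter.mp ha.1).2
  have hwb : wt n b = r := (Finset.mem_filter.mp hb.1).2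
  simp only at hab
  have hw := congrArg (wt n) hab
  rw [wt_add_single, wt_add_single, hwa, hwb] at hw
  have hij : i = j := val_cast_inj (by exact add_left_cancel hw)
  subst hij
  have : a = b := by
    have := congrArg (fun f => f - (Pi.single i 1 : Fin n → ℕ)) hab
    exact add_right_cancel hab
  simp [this]

lemma card_R1_cls [NeZero n] (d : ℕ) (r : ZMod n) :
    (R1 n (cls n d r)).card = n * (cls n d r).card := by
  rw [R1, Finset.card_image_of_injOn cls_injOn, Finset.card_product, Finset.card_univ,
    Fintype.card_fin, mul_comm]

lemma sum_card_cls [NeZero n] (d : ℕ) :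
    ∑ r : ZMod n, (cls n d r).card = (Mset n d).card :=
  (Finset.card_eq_sum_card_fiberwise (fun a _ => Finset.mem_univ (wt n a))).symm

end GGR

namespace GGR
variable {n : ℕ}

lemma mem_Mset {d : ℕ} {a : Fin n → ℕ} : a ∈ Mset n d ↔ ∑ i, a i = d :=
  Finset.Nat.mem_antidiagonalTuple

lemma card_Mset (d : ℕ) : (Mset n d).card = (n + d - 1).choose d := by
  haveI : Fintype {P : Fin n → ℕ // ∑ i, P i = d} :=
    Fintype.ofEquiv _ (Sym.equivNatSumOfFintype (Fin n) d)
  rw [Mset, ← Fintype.card_coe]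
  rw [Fintype.card_congr (Equiv.subtypeEquivRight (fun x => Finset.Nat.mem_antidiagonalTuple) :
    {x // x ∈ Finset.Nat.antidiagonalTuple n d} ≃ {P : Fin n → ℕ // ∑ i, P i = d})]
  rw [← Fintype.card_congr (Sym.equivNatSumOfFintype (Fin n) d), Sym.card_sym_eq_choose,
    Fintype.card_fin]

def spreadSet (n d : ℕ) : Set ℕ := {k | ∃ W : Finset (Fin n → ℕ),
    W ⊆ Mset n d ∧ (R1 n W).card = n * W.card ∧ W.card = k}

lemma spreadSet_bddAbove (d : ℕ) : BddAbove (spreadSet n d) := by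
  refine ⟨(Mset n d).card, ?_⟩
  rintro k ⟨W, hW, _, rfl⟩
  exact Finset.card_le_card hW

lemma spread_lower (d : ℕ) (hn : 0 < n) :
    (Mset n d).card ≤ n * spread n d := by
  haveI : NeZero n := ⟨hn.ne'⟩
  obtain ⟨r, -, hr⟩ := Finset.exists_le_of_sum_le (s := (Finset.univ : Finset (ZMod n)))
    (f := fun _ => (Mset n d).card) (g := fun r => n * (cls n d r).card)
    Finset.univ_nonempty
    (by rw [← Finset.mul_sum, sum_card_cls, Finset.sum_const, Finset.card_univ,
      ZMod.card, smul_eq_mul])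
  refine hr.trans (Nat.mul_le_mul_left n ?_)
  exact le_csSup (spreadSet_bddAbove d) ⟨cls n d r, cls_subset, card_R1_cls d r, rfl⟩

lemma sum_single' (i : Fin n) : ∑ j, (Pi.single i 1 : Fin n → ℕ) j = 1 := by simp

lemma add_single_mem {d : ℕ} {a : Fin n → ℕ} (h : a ∈ Mset n d) (i : Fin n) :
    a + Pi.single i 1 ∈ Mset n (d + 1) := by
  rw [mem_Mset] at h ⊢
  simp only [Pi.add_apply, Finset.sum_add_distrib, h, sum_single']

def decAt (b : Fin n → ℕ) (i : Fin n) : Fin n → ℕ := Function.update b i (b i - 1)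

lemma decAt_add_single {b : Fin n → ℕ} {i : Fin n} (hi : 0 < b i) :
    decAt b i + Pi.single i 1 = b := by
  funext j
  by_cases h : j = i
  · subst h; simp [decAt]; omega
  · simp [decAt, Function.update_of_ne h, Pi.single_eq_of_ne h]

lemma decAt_mem {d : ℕ} {b : Fin n → ℕ} {i : Fin n} (hb : b ∈ Mset n (d + 1))
    (hi : 0 < b i) : decAt b i ∈ Mset n d := by
  rw [mem_Mset] at hb ⊢
  have h2 : ∑ j, (decAt b i + Pi.single i 1 : Fin n → ℕ) j = (∑ j, decAt b i j) + 1 := by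
    simp only [Pi.add_apply, Finset.sum_add_distrib, sum_single']
  rw [decAt_add_single hi, hb] at h2
  omega

lemma mem_R1 {W : Finset (Fin n → ℕ)} {x : Fin n → ℕ} :
    x ∈ R1 n W ↔ ∃ a ∈ W, ∃ i : Fin n, a + Pi.single i 1 = x := by
  unfold R1
  simp only [Finset.mem_image, Finset.mem_product, Finset.mem_univ, and_true, Prod.exists]
  constructor
  · rintro ⟨a, i, ha, rfl⟩; exact ⟨a, ha, i, rfl⟩
  · rintro ⟨a, ha, i, rfl⟩; exact ⟨a, i, ha, rfl⟩

lemma R1_subset_Mset {d : ℕ} {W : Finset (Fin n → ℕ)} (hW : W ⊆ Mset n d) :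
    R1 n W ⊆ Mset n (d + 1) := by
  intro x hx
  rw [mem_R1] at hx
  obtain ⟨a, ha, i, rfl⟩ := hx
  exact add_single_mem (hW ha) i

lemma R1_mono {W W' : Finset (Fin n → ℕ)} (h : W ⊆ W') : R1 n W ⊆ R1 n W' :=
  Finset.image_subset_image (Finset.product_subset_product_left h)

lemma exists_pos {d : ℕ} {b : Fin n → ℕ} (hb : b ∈ Mset n (d + 1)) : ∃ i, 0 < b i := by
  by_contra h
  push_neg at h
  rw [mem_Mset] at hb
  have : ∑ i, b i = 0 := Finset.sum_eq_zero fun i _ => Nat.le_zero.mp (h i)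
  omega

/-- `Mset n (d-1)` always covers. -/
lemma R1_Mset (d : ℕ) : R1 n (Mset n d) = Mset n (d + 1) := by
  apply Finset.Subset.antisymm (R1_subset_Mset Finset.Subset.rfl)
  intro b hb
  obtain ⟨i, hi⟩ := exists_pos hb
  rw [mem_R1]
  exact ⟨decAt b i, decAt_mem hb hi, i, decAt_add_single hi⟩

/-- key comparison: any spread cardinality is at most any cover cardinality -/
lemma spread_le_cover {d : ℕ} (hn : 0 < n) {W C : Finset (Fin n → ℕ)}
    (hW : W ⊆ Mset n (d + 1)) (hWs : (R1 n W).card = n * W.card)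
    (hC : R1 n C = Mset n (d + 1)) : W.card ≤ C.card := by
  classical
  have hinj : Set.InjOn (fun p : (Fin n → ℕ) × Fin n => p.1 + Pi.single p.2 1)
      ((W ×ˢ (Finset.univ : Finset (Fin n)) : Finset _) : Set _) := by
    apply Finset.injOn_of_card_image_eq
    rw [Finset.card_product, Finset.card_univ, Fintype.card_fin, mul_comm]
    exact hWs
  have hex : ∀ w ∈ W, ∃ p : (Fin n → ℕ) × Fin n, p.1 ∈ C ∧ p.1 + Pi.single p.2 1 = w := by
    intro w hw
    have : w ∈ R1 n C := hC ▸ hW hw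
    rw [mem_R1] at this
    obtain ⟨a, ha, i, hai⟩ := this
    exact ⟨(a, i), ha, hai⟩
  set f : (Fin n → ℕ) → (Fin n → ℕ) := fun w =>
    if h : ∃ p : (Fin n → ℕ) × Fin n, p.1 ∈ C ∧ p.1 + Pi.single p.2 1 = w
    then h.choose.1 else w with hf
  set g : (Fin n → ℕ) → Fin n := fun w =>
    if h : ∃ p : (Fin n → ℕ) × Fin n, p.1 ∈ C ∧ p.1 + Pi.single p.2 1 = w
    then h.choose.2 else ⟨0, hn⟩ with hg
  have hfg : ∀ w ∈ W, f w ∈ C ∧ f w + Pi.single (g w) 1 = w := by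
    intro w hw
    have h := hex w hw
    simp only [hf, hg, dif_pos h]
    exact h.choose_spec
  apply Finset.card_le_card_of_injOn f (fun w hw => (hfg w hw).1)
  intro w1 hw1 w2 hw2 hf12
  have h1 := (hfg w1 (Finset.mem_coe.mp hw1)).2
  have h2 := (hfg w2 (Finset.mem_coe.mp hw2)).2
  have key : w1 + Pi.single (g w2) 1 = w2 + Pi.single (g w1) 1 := by
    calc w1 + Pi.single (g w2) 1
        = f w1 + Pi.single (g w1) 1 + Pi.single (g w2) 1 := by rw [h1]
      _ = f w2 + Pi.single (g w2) 1 + Pi.single (g w1) 1 := by rw [hf12, add_right_comm]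
      _ = w2 + Pi.single (g w1) 1 := by rw [h2]
  have hm1 : ((w1, g w2) : (Fin n → ℕ) × Fin n) ∈
      ((W ×ˢ (Finset.univ : Finset (Fin n)) : Finset _) : Set _) :=
    Finset.mem_coe.mpr (Finset.mem_product.mpr ⟨Finset.mem_coe.mp hw1, Finset.mem_univ _⟩)
  have hm2 : ((w2, g w1) : (Fin n → ℕ) × Fin n) ∈
      ((W ×ˢ (Finset.univ : Finset (Fin n)) : Finset _) : Set _) :=
    Finset.mem_coe.mpr (Finset.mem_product.mpr ⟨Finset.mem_coe.mp hw2, Finset.mem_univ _⟩)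
  have hpair := hinj hm1 hm2 key
  exact congrArg Prod.fst hpair

def supp (b : Fin n → ℕ) : Finset (Fin n) := Finset.univ.filter (fun i => 0 < b i)

def cov (n : ℕ) (b : Fin n → ℕ) : Finset (ZMod n) :=
  (supp b).image (fun i => wt n b - (i.val : ZMod n))

lemma mem_R1_cls_iff [NeZero n] {d : ℕ} {b : Fin n → ℕ} (hb : b ∈ Mset n (d + 1))
    (r : ZMod n) : b ∈ R1 n (cls n d r) ↔ r ∈ cov n b := by
  constructor
  · intro h
    rw [mem_R1] at h
    obtain ⟨a, ha, i, rfl⟩ := h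
    rw [cls, Finset.mem_filter] at ha
    rw [cov, Finset.mem_image]
    refine ⟨i, ?_, ?_⟩
    · rw [supp, Finset.mem_filter]
      refine ⟨Finset.mem_univ _, ?_⟩
      simp [Pi.add_apply, Pi.single_eq_same]
    · rw [wt_add_single, ha.2]
      ring
  · intro h
    rw [cov, Finset.mem_image] at h
    obtain ⟨i, hi, hr⟩ := h
    rw [supp, Finset.mem_filter] at hi
    have hpos : 0 < b i := hi.2
    rw [mem_R1]
    refine ⟨decAt b i, ?_, i, decAt_add_single hpos⟩
    rw [cls, Finset.mem_filter]
    refine ⟨decAt_mem hb hpos, ?_⟩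
    have hw := wt_add_single (decAt b i) i
    rw [decAt_add_single hpos] at hw
    rw [← hr, hw]
    ring

lemma card_cov [NeZero n] (b : Fin n → ℕ) : (cov n b).card = (supp b).card := by
  rw [cov]
  apply Finset.card_image_of_injOn
  intro i _ j _ hij
  simp only at hij
  apply val_cast_inj (n := n)
  have := sub_right_injective hij
  exact this

lemma card_filter_pos (d : ℕ) (i : Fin n) :
    ((Mset n (d + 1)).filter (fun b => 0 < b i)).card = (Mset n d).card := by
  refine Finset.card_bij' (fun b _ => decAt b i) (fun a _ => a + Pi.single i 1)
    (fun b hb => ?_) (fun a ha => ?_) (fun b hb => ?_) (fun a ha => ?_)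
  · have hb' := Finset.mem_filter.mp hb
    exact decAt_mem hb'.1 hb'.2
  · refine Finset.mem_filter.mpr ⟨add_single_mem ha i, ?_⟩
    simp [Pi.add_apply, Pi.single_eq_same]
  · exact decAt_add_single (Finset.mem_filter.mp hb).2
  · have hpos : 0 < (a + Pi.single i 1 : Fin n → ℕ) i := by
      simp [Pi.add_apply, Pi.single_eq_same]
    exact add_right_cancel (decAt_add_single hpos)

lemma sum_supp (d : ℕ) :
    ∑ b ∈ Mset n (d + 1), (supp b).card = n * (Mset n d).card := by
  have h1 : ∀ b : Fin n → ℕ, (supp b).card = ∑ i : Fin n, if 0 < b i then 1 else 0 := by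
    intro b; rw [supp, Finset.card_filter]
  simp_rw [h1]
  rw [Finset.sum_comm]
  have h2 : ∀ i : Fin n, (∑ b ∈ Mset n (d + 1), if 0 < b i then 1 else 0)
      = (Mset n d).card := by
    intro i
    rw [← Finset.card_filter]
    exact card_filter_pos d i
  rw [Finset.sum_congr rfl (fun i _ => h2 i), Finset.sum_const, Finset.card_univ,
    Fintype.card_fin, smul_eq_mul]

lemma supp_card_le (b : Fin n → ℕ) : (supp b).card ≤ n := by
  have := Finset.card_le_card (Finset.filter_subset (fun i => 0 < b i) Finset.univ)
  rwa [Finset.card_univ, Fintype.card_fin] at this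

lemma sum_card_uncov [NeZero n] (d : ℕ) :
    ∑ r : ZMod n, ((Mset n (d + 1)).filter (fun b => b ∉ R1 n (cls n d r))).card
      = ∑ b ∈ Mset n (d + 1), (n - (supp b).card) := by
  classical
  have step1 : ∀ r : ZMod n,
      ((Mset n (d + 1)).filter (fun b => b ∉ R1 n (cls n d r))).card
        = ∑ b ∈ Mset n (d + 1), if b ∈ R1 n (cls n d r) then 0 else 1 := by
    intro r
    rw [Finset.card_filter]
    refine Finset.sum_congr rfl fun b _ => ?_
    by_cases h : b ∈ R1 n (cls n d r) <;> simp [h]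
  rw [Finset.sum_congr rfl (fun r _ => step1 r), Finset.sum_comm]
  refine Finset.sum_congr rfl fun b hb => ?_
  have t1 : (∑ r : ZMod n, if b ∈ R1 n (cls n d r) then 0 else 1)
      = ∑ r : ZMod n, if r ∈ cov n b then 0 else 1 := by
    refine Finset.sum_congr rfl fun r _ => ?_
    by_cases h : b ∈ R1 n (cls n d r)
    · rw [if_pos h, if_pos ((mem_R1_cls_iff hb r).mp h)]
    · rw [if_neg h, if_neg (fun hc => h ((mem_R1_cls_iff hb r).mpr hc))]
  rw [t1]
  have t2 : (∑ r : ZMod n, if r ∈ cov n b then 0 else 1)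
      = ((Finset.univ : Finset (ZMod n)).filter (fun r => r ∉ cov n b)).card := by
    rw [Finset.card_filter]
    refine Finset.sum_congr rfl fun r _ => ?_
    by_cases h : r ∈ cov n b <;> simp [h]
  rw [t2]
  have t3 : (Finset.univ : Finset (ZMod n)).filter (fun r => r ∉ cov n b)
      = (Finset.univ : Finset (ZMod n)) \ cov n b := by
    ext r; simp
  rw [t3, Finset.card_sdiff_of_subset (Finset.subset_univ _), Finset.card_univ, ZMod.card,
    card_cov]

noncomputable def pickI [NeZero n] (b : Fin n → ℕ) : Fin n :=
  if h : ∃ i, 0 < b i then h.choose else 0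

lemma pickI_pos [NeZero n] {b : Fin n → ℕ} (h : ∃ i, 0 < b i) : 0 < b (pickI b) := by
  rw [pickI, dif_pos h]; exact h.choose_spec

def uncov (n d : ℕ) (r : ZMod n) : Finset (Fin n → ℕ) :=
  (Mset n (d + 1)).filter (fun b => b ∉ R1 n (cls n d r))

noncomputable def Cr (n d : ℕ) [NeZero n] (r : ZMod n) : Finset (Fin n → ℕ) :=
  cls n d r ∪ (uncov n d r).image (fun b => decAt b (pickI b))

lemma Cr_subset [NeZero n] {d : ℕ} {r : ZMod n} : Cr n d r ⊆ Mset n d := by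
  refine Finset.union_subset cls_subset ?_
  intro x hx
  rw [Finset.mem_image] at hx
  obtain ⟨b, hb, rfl⟩ := hx
  have hb' : b ∈ Mset n (d + 1) := (Finset.mem_filter.mp hb).1
  exact decAt_mem hb' (pickI_pos (exists_pos hb'))

lemma R1_Cr [NeZero n] {d : ℕ} {r : ZMod n} : R1 n (Cr n d r) = Mset n (d + 1) := by
  apply Finset.Subset.antisymm (R1_subset_Mset Cr_subset)
  intro b hb
  by_cases h : b ∈ R1 n (cls n d r)
  · exact R1_mono Finset.subset_union_left h
  · have hbU : b ∈ uncov n d r := Finset.mem_filter.mpr ⟨hb, h⟩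
    have hp := pickI_pos (exists_pos hb)
    rw [mem_R1]
    exact ⟨decAt b (pickI b),
      Finset.subset_union_right (Finset.mem_image_of_mem _ hbU),
      pickI b, decAt_add_single hp⟩

lemma card_Cr_le [NeZero n] {d : ℕ} {r : ZMod n} :
    (Cr n d r).card ≤ (cls n d r).card + (uncov n d r).card :=
  (Finset.card_union_le _ _).trans (Nat.add_le_add_left Finset.card_image_le _)

lemma cover_exists [NeZero n] (d : ℕ) :
    ∃ C : Finset (Fin n → ℕ), C ⊆ Mset n d ∧ R1 n C = Mset n (d + 1) ∧
      n * C.card + n * (Mset n d).card ≤ (Mset n d).card + n * (Mset n (d + 1)).card := by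
  classical
  set T := ∑ r : ZMod n, ((cls n d r).card + (uncov n d r).card) with hT
  have htot : T = (Mset n d).card + ∑ b ∈ Mset n (d + 1), (n - (supp b).card) := by
    rw [hT, Finset.sum_add_distrib, sum_card_cls]
    congr 1
    exact sum_card_uncov d
  have hsub : (∑ b ∈ Mset n (d + 1), (n - (supp b).card)) + n * (Mset n d).card
      = n * (Mset n (d + 1)).card := by
    rw [← sum_supp d, ← Finset.sum_add_distrib]
    have h : ∀ b ∈ Mset n (d + 1), (n - (supp b).card) + (supp b).card = n :=
      fun b _ => Nat.sub_add_cancel (supp_card_le b)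
    rw [Finset.sum_congr rfl h, Finset.sum_const, smul_eq_mul, mul_comm]
  obtain ⟨r, -, hr⟩ := Finset.exists_le_of_sum_le
    (s := (Finset.univ : Finset (ZMod n)))
    (f := fun r => n * ((cls n d r).card + (uncov n d r).card))
    (g := fun _ => T)
    Finset.univ_nonempty
    (by rw [← Finset.mul_sum, ← hT, Finset.sum_const, Finset.card_univ, ZMod.card,
      smul_eq_mul])
  refine ⟨Cr n d r, Cr_subset, R1_Cr, ?_⟩
  have h1 : n * (Cr n d r).card ≤ T :=
    (Nat.mul_le_mul_left n card_Cr_le).trans hr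
  calc n * (Cr n d r).card + n * (Mset n d).card
      ≤ T + n * (Mset n d).card := Nat.add_le_add_right h1 _
    _ = (Mset n d).card + ((∑ b ∈ Mset n (d + 1), (n - (supp b).card))
        + n * (Mset n d).card) := by rw [htot, add_assoc]
    _ = (Mset n d).card + n * (Mset n (d + 1)).card := by rw [hsub]

end GGR

namespace GGR

lemma rho_le {n e : ℕ} {C : Finset (Fin n → ℕ)} (hC1 : C ⊆ Mset n (e - 1))
    (hC2 : R1 n C = Mset n e) : rho n e ≤ C.card :=
  Nat.sInf_le ⟨C, hC1, hC2, rfl⟩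

lemma R1_empty : R1 n (∅ : Finset (Fin n → ℕ)) = ∅ := by
  simp [R1]

end GGR

/-- Geramita–Gregory–Roberts bounds: for `n ≥ 2` and `d ≥ 2`,
`v_n(d)/n ≤ α_n(d) ≤ ρ_n(d) ≤ v_n(d)/n + ((n-1)/n)·v_{n-1}(d)` in `ℚ`,
where `v_n(d) = C(n+d-1, d)`. -/
theorem ggr_bounds (n d : ℕ) (hn : 2 ≤ n) (hd : 2 ≤ d) :
    (Nat.choose (n + d - 1) d : ℚ) / n ≤ (spread n d : ℚ) ∧
    (spread n d : ℚ) ≤ (rho n d : ℚ) ∧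
    (rho n d : ℚ) ≤ (Nat.choose (n + d - 1) d : ℚ) / n +
      ((n : ℚ) - 1) / n * (Nat.choose (n - 1 + d - 1) d : ℚ) := by
  classical
  haveI : NeZero n := ⟨by omega⟩
  have hn0 : 0 < n := by omega
  obtain ⟨d', rfl⟩ : ∃ d', d = d' + 1 := ⟨d - 1, by omega⟩
  have hd1 : (d' + 1) - 1 = d' := by omega
  set m := n + d' - 1 with hm
  -- cardinalities
  have hv1 : (Mset n (d' + 1)).card = (n + (d' + 1) - 1).choose (d' + 1) := GGR.card_Mset _
  have hv0 : (Mset n d').card = (n + d' - 1).choose d' := GGR.card_Mset _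
  have hmm1 : n + (d' + 1) - 1 = m + 1 := by omega
  have hmm2 : n - 1 + (d' + 1) - 1 = m := by omega
  set w := m.choose (d' + 1) with hw
  have hpascal : (m + 1).choose (d' + 1) = m.choose d' + w := Nat.choose_succ_succ m d'
  have hv1' : (Mset n (d' + 1)).card = m.choose d' + w := by rw [hv1, hmm1, hpascal]
  have hv0' : (Mset n d').card = m.choose d' := by rw [hv0]
  -- the cover
  obtain ⟨C, hC1, hC2, hC3⟩ := GGR.cover_exists (n := n) d'
  have hC1' : C ⊆ Mset n ((d' + 1) - 1) := by rw [hd1]; exact hC1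
  -- spread lower bound (Part A)
  have hA : (Mset n (d' + 1)).card ≤ n * spread n (d' + 1) := GGR.spread_lower _ hn0
  -- Part B : spread ≤ rho (ℕ)
  have hB : spread n (d' + 1) ≤ rho n (d' + 1) := by
    have hne : {k | ∃ W : Finset (Fin n → ℕ),
        W ⊆ Mset n ((d' + 1) - 1) ∧ R1 n W = Mset n (d' + 1) ∧ W.card = k}.Nonempty :=
      ⟨C.card, C, hC1', hC2, rfl⟩
    apply csSup_le
    · exact ⟨0, ⟨∅, Finset.empty_subset _, by simp [GGR.R1_empty], Finset.card_empty⟩⟩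
    · rintro k ⟨W, hW, hWs, rfl⟩
      apply le_csInf hne
      rintro kc ⟨C', hC'1, hC'2, rfl⟩
      exact GGR.spread_le_cover hn0 hW hWs hC'2
  -- Part C : rho bound (ℕ) : n * rho ≤ v0 + n * w
  have hC : n * rho n (d' + 1) ≤ m.choose d' + n * w := by
    have h1 : rho n (d' + 1) ≤ C.card := GGR.rho_le hC1' hC2
    have h2 := hC3
    rw [hv0', hv1'] at h2
    have : n * C.card ≤ m.choose d' + n * w := by nlinarith
    calc n * rho n (d' + 1) ≤ n * C.card := Nat.mul_le_mul_left n h1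
      _ ≤ m.choose d' + n * w := this
  -- now the rational statements
  have hnQ : (0 : ℚ) < n := by exact_mod_cast hn0
  refine ⟨?_, ?_, ?_⟩
  · rw [div_le_iff₀ hnQ]
    have : ((n + (d' + 1) - 1).choose (d' + 1) : ℚ) ≤ (n : ℚ) * spread n (d' + 1) := by
      rw [← hv1]; exact_mod_cast hA
    linarith [this]
  · exact_mod_cast hB
  · have hcast : (n : ℚ) * rho n (d' + 1) ≤ (m.choose d' : ℚ) + n * w := by
      exact_mod_cast hC
    have hv1Q : ((n + (d' + 1) - 1).choose (d' + 1) : ℚ) = (m.choose d' : ℚ) + w := by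
      rw [hmm1]; exact_mod_cast hpascal
    have hwQ : ((n - 1 + (d' + 1) - 1).choose (d' + 1) : ℚ) = (w : ℚ) := by
      rw [hmm2]
    rw [hwQ, hv1Q]
    rw [div_add' _ _ _ (ne_of_gt hnQ), le_div_iff₀ hnQ]
    have key : ((m.choose d' : ℚ) + (w : ℚ) + ((n : ℚ) - 1) / (n : ℚ) * (w : ℚ) * (n : ℚ))
        = (m.choose d' : ℚ) + (n : ℚ) * (w : ℚ) := by
      field_simp
      ring
    rw [key]
    nlinarith [hcast]
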